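/- Let A be an n×n copositive matrix and let I ⊆ {1,…,n} be an index set such that the principal submatrix A_I is positive definite. Let u be a zero of A such that Supp(u) \ I = {k} consists of exactly one element, and normalize u so that u_k = 1. Then A_{kk} = u_I^T A_I u_I, and u is a minimal zero of A. -/

import Mathlib

open Matrix

/-- A symmetric matrix `A` is copositive if `xᵀ A x ≥ 0` for all entrywise nonnegative `x`. -/
def Copositive {n : ℕ} (A : Matrix (Fin n) (Fin n) ℝ) : Prop :=
  A.IsSymm ∧ ∀ x : Fin n → ℝ, (∀ i, 0 ≤ x i) → 0 ≤ x ⬝ᵥ A.mulVec x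

/-- The support of a vector. -/
def Supp {ι : Type*} (u : ι → ℝ) : Set ι := {i | u i ≠ 0}

/-- A zero of a copositive matrix: a nonzero nonnegative vector `u` with `uᵀ A u = 0`. -/
def IsZeroOf {n : ℕ} (A : Matrix (Fin n) (Fin n) ℝ) (u : Fin n → ℝ) : Prop :=
  u ≠ 0 ∧ (∀ i, 0 ≤ u i) ∧ u ⬝ᵥ A.mulVec u = 0

/-- A minimal zero: a zero such that no zero has support strictly contained in its support. -/
def IsMinimalZeroOf {n : ℕ} (A : Matrix (Fin n) (Fin n) ℝ) (u : Fin n → ℝ) : Prop :=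
  IsZeroOf A u ∧ ¬ ∃ v, IsZeroOf A v ∧ Supp v ⊂ Supp u

/-- The principal submatrix of `A` with rows and columns in `I`. -/
def subMat {n : ℕ} (A : Matrix (Fin n) (Fin n) ℝ) (I : Finset (Fin n)) :
    Matrix {i // i ∈ I} {i // i ∈ I} ℝ :=
  A.submatrix Subtype.val Subtype.val

/-- The subvector of `u` with indices in `I`. -/
def subVec {n : ℕ} (u : Fin n → ℝ) (I : Finset (Fin n)) : {i // i ∈ I} → ℝ :=
  fun i => u i.val

/-- Irreducibility of a copositive matrix `A` with respect to a set `M` of matrices. -/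
def IrreducibleWrtSet {n : ℕ} (A : Matrix (Fin n) (Fin n) ℝ)
    (M : Set (Matrix (Fin n) (Fin n) ℝ)) : Prop :=
  ¬ ∃ γ : ℝ, 0 < γ ∧ ∃ B ∈ M, B ≠ 0 ∧ Copositive (A - γ • B)

/-- Irreducibility of a copositive matrix `A` with respect to a single matrix `M`. -/
def IrreducibleWrtMat {n : ℕ} (A M : Matrix (Fin n) (Fin n) ℝ) : Prop :=
  ¬ ∃ γ : ℝ, 0 < γ ∧ Copositive (A - γ • M)

/-- An extremal element of a cone `K` of vectors. -/
def IsExtremalIn {ι : Type*} (K : Set (ι → ℝ)) (u : ι → ℝ) : Prop :=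
  u ∈ K ∧ u ≠ 0 ∧ ∀ v w, v ∈ K → w ∈ K → u = v + w →
    (∃ a : ℝ, 0 ≤ a ∧ v = a • u) ∧ (∃ b : ℝ, 0 ≤ b ∧ w = b • u)

/-- The matrix with entries 1 at positions `(i,j)` and `(j,i)` and 0 elsewhere. -/
def Eij {n : ℕ} (i j : Fin n) : Matrix (Fin n) (Fin n) ℝ :=
  fun a b => if (a = i ∧ b = j) ∨ (a = j ∧ b = i) then 1 else 0

section helpers
variable {n : ℕ}

lemma dot_symm {A : Matrix (Fin n) (Fin n) ℝ} (hA : A.IsSymm) (x y : Fin n → ℝ) :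
    x ⬝ᵥ A.mulVec y = y ⬝ᵥ A.mulVec x := by
  rw [Matrix.dotProduct_mulVec, ← Matrix.mulVec_transpose, hA.eq, dotProduct_comm]

lemma quad_expand (A : Matrix (Fin n) (Fin n) ℝ) (x y : Fin n → ℝ) :
    (x + y) ⬝ᵥ A.mulVec (x + y) =
      x ⬝ᵥ A.mulVec x + x ⬝ᵥ A.mulVec y + y ⬝ᵥ A.mulVec x + y ⬝ᵥ A.mulVec y := by
  simp [Matrix.mulVec_add, dotProduct_add, add_dotProduct]; ring

lemma scalar_key {c a δ : ℝ} (hδ : 0 < δ)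
    (h : ∀ t, 0 < t → t ≤ δ → 0 ≤ 2*t*c + t^2*a) : 0 ≤ c := by
  by_contra hc
  push_neg at hc
  have hpos : (0:ℝ) < |a| + 1 := by positivity
  set t := min δ (-c/(|a|+1)) with ht
  have ht0 : 0 < t := lt_min hδ (div_pos (by linarith) hpos)
  have h1 := h t ht0 (min_le_left _ _)
  have h2 : t * (|a|+1) ≤ -c := by
    rw [← le_div_iff₀ hpos]; exact min_le_right _ _
  nlinarith [le_abs_self a, mul_le_mul_of_nonneg_left (le_abs_self a) (mul_pos ht0 ht0).le,
    mul_pos ht0 ht0, mul_le_mul_of_nonneg_left h2 ht0.le]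

lemma zero_quad_ineq {A : Matrix (Fin n) (Fin n) ℝ} (hA : Copositive A) {u : Fin n → ℝ}
    (hu : IsZeroOf A u) (i : Fin n) (t : ℝ) (ht : ∀ j, 0 ≤ (u + Pi.single i t : Fin n → ℝ) j) :
    0 ≤ 2*t*(A.mulVec u i) + t^2 * A i i := by
  have h := hA.2 _ ht
  rw [quad_expand, hu.2.2, dot_symm hA.1 u (Pi.single i t)] at h
  simp only [single_dotProduct, Matrix.mulVec_single, Pi.smul_apply, op_smul_eq_mul, Matrix.col_apply] at h
  nlinarith [h]

lemma mulVec_nonneg {A : Matrix (Fin n) (Fin n) ℝ} (hA : Copositive A) {u : Fin n → ℝ}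
    (hu : IsZeroOf A u) (i : Fin n) : 0 ≤ A.mulVec u i := by
  apply scalar_key (a := A i i) (δ := 1) one_pos
  intro t ht0 _
  apply zero_quad_ineq hA hu i t
  intro j
  rcases eq_or_ne j i with rfl | hj
  · simp only [Pi.add_apply, Pi.single_eq_same]
    exact add_nonneg (hu.2.1 j) ht0.le
  · simp only [Pi.add_apply, Pi.single_eq_of_ne hj, add_zero]
    exact hu.2.1 j

lemma mulVec_eq_zero_on_supp {A : Matrix (Fin n) (Fin n) ℝ} (hA : Copositive A) {u : Fin n → ℝ}
    (hu : IsZeroOf A u) (i : Fin n) (hi : u i ≠ 0) : A.mulVec u i = 0 := by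
  have h1 := mulVec_nonneg hA hu i
  have hui : 0 < u i := (hu.2.1 i).lt_of_ne (Ne.symm hi)
  have h2 : 0 ≤ -(A.mulVec u i) := by
    apply scalar_key (a := A i i) (δ := u i) hui
    intro t ht0 htle
    have key := zero_quad_ineq hA hu i (-t) ?_
    · nlinarith [key]
    · intro j
      rcases eq_or_ne j i with rfl | hj
      · simp only [Pi.add_apply, Pi.single_eq_same]
        linarith
      · simp only [Pi.add_apply, Pi.single_eq_of_ne hj, add_zero]
        exact hu.2.1 j
  linarith

lemma sub_quad (A : Matrix (Fin n) (Fin n) ℝ) (I : Finset (Fin n)) (x : Fin n → ℝ)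
    (hx : ∀ i, i ∉ I → x i = 0) :
    subVec x I ⬝ᵥ (subMat A I).mulVec (subVec x I) = x ⬝ᵥ A.mulVec x := by
  have inner : ∀ i, A.mulVec x i = ∑ j ∈ I, A i j * x j := by
    intro i
    simp only [Matrix.mulVec, dotProduct]
    exact (Finset.sum_subset (Finset.subset_univ I)
      (fun j _ hj => by rw [hx j hj, mul_zero])).symm
  have outer : x ⬝ᵥ A.mulVec x = ∑ i ∈ I, x i * ∑ j ∈ I, A i j * x j := by
    simp only [dotProduct, inner]
    exact (Finset.sum_subset (Finset.subset_univ I)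
      (fun i _ hi => by rw [hx i hi, zero_mul])).symm
  rw [outer]
  simp only [dotProduct, Matrix.mulVec, subMat, subVec, Matrix.submatrix_apply]
  rw [Finset.sum_coe_sort I (fun a => x a * ∑ j : {j // j ∈ I}, A a j * x j)]
  refine Finset.sum_congr rfl fun i _ => ?_
  congr 1
  exact Finset.sum_coe_sort I (fun j => A i j * x j)

lemma posdef_zero {A : Matrix (Fin n) (Fin n) ℝ} {I : Finset (Fin n)}
    (hI : (subMat A I).PosDef) {x : Fin n → ℝ}
    (hx : ∀ i, i ∉ I → x i = 0) (hq : x ⬝ᵥ A.mulVec x = 0) : x = 0 := by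
  by_contra hx0
  have hsub : subVec x I ≠ 0 := by
    intro h0
    apply hx0
    funext i
    by_cases hi : i ∈ I
    · exact congrFun h0 ⟨i, hi⟩
    · exact hx i hi
  have hlt := hI.dotProduct_mulVec_pos hsub
  rw [show star (subVec x I) = subVec x I from rfl] at hlt
  rw [show (subMat A I) *ᵥ (subVec x I) = (subMat A I).mulVec (subVec x I) from rfl] at hlt
  rw [sub_quad A I x hx, hq] at hlt
  exact lt_irrefl 0 hlt

end helpers

theorem stmt9 {n : ℕ} (A : Matrix (Fin n) (Fin n) ℝ) (hA : Copositive A)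
    (I : Finset (Fin n)) (hI : (subMat A I).PosDef)
    (u : Fin n → ℝ) (hu : IsZeroOf A u)
    (k : Fin n) (hk : Supp u \ (I : Set (Fin n)) = {k}) (huk : u k = 1) :
    A k k = subVec u I ⬝ᵥ (subMat A I).mulVec (subVec u I) ∧ IsMinimalZeroOf A u := by
  have hksupp : k ∈ Supp u \ (I : Set (Fin n)) := by rw [hk]; rfl
  have hkI : k ∉ I := fun h => hksupp.2 h
  have hsuppsub : ∀ i, i ∉ I → i ≠ k → u i = 0 := by
    intro i hi hik
    by_contra h
    have hmem : i ∈ Supp u \ (I : Set (Fin n)) := ⟨h, fun h2 => hi h2⟩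
    rw [hk] at hmem
    exact hik hmem
  set v : Fin n → ℝ := fun i => if i ∈ I then u i else 0 with hv
  have hvI : ∀ i, i ∉ I → v i = 0 := fun i hi => by simp [hv, hi]
  have huv : u = v + Pi.single k 1 := by
    funext i
    by_cases hi : i ∈ I
    · have hik : i ≠ k := fun h => hkI (h ▸ hi)
      simp [hv, hi, Pi.single_eq_of_ne hik]
    · rcases eq_or_ne i k with rfl | hik
      · simp [hv, hkI, huk]
      · simp [hv, hi, Pi.single_eq_of_ne hik, hsuppsub i hi hik]
  have hAuk : A.mulVec u k = 0 := mulVec_eq_zero_on_supp hA hu k (by rw [huk]; norm_num)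
  have hexp : v ⬝ᵥ A.mulVec v + 2 * A.mulVec v k + A k k = 0 := by
    have h0 := hu.2.2
    rw [huv, quad_expand, dot_symm hA.1 v (Pi.single k 1)] at h0
    simp only [single_dotProduct, Matrix.mulVec_single, Pi.smul_apply, op_smul_eq_mul, Matrix.col_apply, one_mul, mul_one] at h0
    linarith
  have hAvk : A.mulVec v k = - A k k := by
    have h0 : A.mulVec u k = A.mulVec v k + A k k := by
      rw [huv, Matrix.mulVec_add, Matrix.mulVec_single]
      simp
    rw [hAuk] at h0
    linarith
  have h1 : A k k = v ⬝ᵥ A.mulVec v := by rw [hAvk] at hexp; linarith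
  have hsubvec : subVec u I = subVec v I := by
    funext i
    simp [subVec, hv, i.2]
  constructor
  · rw [hsubvec, sub_quad A I v hvI]
    exact h1
  refine ⟨hu, ?_⟩
  rintro ⟨w, hw, hsub⟩
  have hws : ∀ i, w i ≠ 0 → u i ≠ 0 := fun i hi => hsub.1 hi
  by_cases hwk : w k = 0
  · have hwI : ∀ i, i ∉ I → w i = 0 := by
      intro i hi
      by_contra h
      rcases eq_or_ne i k with rfl | hik
      · exact h hwk
      · exact h (by_contra fun h2 => (hsuppsub i hi hik ▸ hws i h) rfl)
    exact hw.1 (posdef_zero hI hwI hw.2.2)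
  · have hwk' : 0 < w k := (hw.2.1 k).lt_of_ne (Ne.symm hwk)
    set c := (w k)⁻¹ with hc
    have hc0 : 0 < c := inv_pos.mpr hwk'
    set w' := c • w with hw'
    have hw'q : w' ⬝ᵥ A.mulVec w' = 0 := by
      rw [hw', Matrix.mulVec_smul, dotProduct_smul, smul_dotProduct, hw.2.2]
      simp
    have hcross : w' ⬝ᵥ A.mulVec u = 0 := by
      simp only [dotProduct]
      apply Finset.sum_eq_zero
      intro i _
      by_cases hwi : w i = 0
      · simp [hw', hwi]
      · rw [mulVec_eq_zero_on_supp hA hu i (hws i hwi), mul_zero]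
    have hzI : ∀ i, i ∉ I → (u - w') i = 0 := by
      intro i hi
      rcases eq_or_ne i k with rfl | hik
      · simp [hw', huk, hc, inv_mul_cancel₀ hwk]
      · have hui : u i = 0 := hsuppsub i hi hik
        have hwi : w i = 0 := by_contra fun h2 => (hws i h2) hui
        simp [hw', hui, hwi]
    have hzq : (u - w') ⬝ᵥ A.mulVec (u - w') = 0 := by
      rw [sub_eq_add_neg, quad_expand]
      simp only [Matrix.mulVec_neg, dotProduct_neg, neg_dotProduct, neg_neg]
      rw [hu.2.2, hw'q, hcross, dot_symm hA.1 u w', hcross]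
      ring
    have hz0 : u - w' = 0 := posdef_zero hI hzI hzq
    have huw : u = w' := by
      have := sub_eq_zero.mp hz0
      exact this
    have hsuppeq : Supp w = Supp u := by
      ext i
      simp only [Supp, Set.mem_setOf_eq]
      constructor
      · exact fun h => hws i h
      · intro h hwi
        apply h
        rw [huw, hw']
        simp [hwi]
    exact hsub.2 (hsuppeq ▸ Set.Subset.refl _)
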